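/- Let E, F ⊂ ℝ^N be measurable sets of equal positive Gaussian measure with γ(F△E)/γ(F) ≤ κ·𝒜_γ(F) for some 0 < κ < 1/2. Then 𝒜_γ(E) ≥ ((1−2κ)/(1+2κ))·𝒜_γ(F). -/

import Mathlib

open MeasureTheory

/-- The standard Gaussian measure on `ℝ^N`. -/
noncomputable def gaussMeasure (N : ℕ) : Measure (EuclideanSpace ℝ (Fin N)) :=
  volume.withDensity
    (fun x => ENNReal.ofReal ((2 * Real.pi) ^ (-(N:ℝ)/2) * Real.exp (-‖x‖ ^ 2 / 2)))

/-- The one-dimensional standard Gaussian distribution function. -/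
noncomputable def Phi (r : ℝ) : ℝ :=
  (2 * Real.pi) ^ (-(1:ℝ)/2) * ∫ t in Set.Iio r, Real.exp (-t ^ 2 / 2)

/-- The halfspace `{x : x·ω < r}`. -/
def halfspace (N : ℕ) (ω : EuclideanSpace ℝ (Fin N)) (r : ℝ) :
    Set (EuclideanSpace ℝ (Fin N)) := {x | (inner ℝ x ω : ℝ) < r}

/-- The Gaussian Fraenkel asymmetry of a set `Ω`. -/
noncomputable def gaussAsym (N : ℕ) (Ω : Set (EuclideanSpace ℝ (Fin N))) : ℝ :=
  sInf {a : ℝ | ∃ ω : EuclideanSpace ℝ (Fin N), ∃ r : ℝ, ‖ω‖ = 1 ∧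
    Phi r = (gaussMeasure N Ω).toReal ∧
    a = (gaussMeasure N (symmDiff Ω (halfspace N ω r))).toReal / (gaussMeasure N Ω).toReal}

theorem gauss_integrable (N : ℕ) : Integrable (fun x : EuclideanSpace ℝ (Fin N) =>
    (2 * Real.pi) ^ (-(N:ℝ)/2) * Real.exp (-‖x‖ ^ 2 / 2)) := by
  apply Integrable.const_mul
  have h := (GaussianFourier.integrable_cexp_neg_mul_sq_norm_add (V := EuclideanSpace ℝ (Fin N))
    (b := (1:ℂ)/2) (by norm_num) 0 0).norm
  convert h using 2 with x
  simp only [Complex.norm_exp, mul_zero, zero_mul, add_zero]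
  congr 1
  have h2 : ((-(1/2:ℂ)) * (‖x‖:ℂ) ^ 2) = ((-(1/2) * ‖x‖^2 : ℝ) : ℂ) := by
    push_cast; ring
  rw [h2, Complex.ofReal_re]
  ring

instance gauss_finite (N : ℕ) : IsFiniteMeasure (gaussMeasure N) := by
  constructor
  rw [gaussMeasure, withDensity_apply _ MeasurableSet.univ, Measure.restrict_univ,
    ← ofReal_integral_eq_lintegral_ofReal (gauss_integrable N)
      (Filter.Eventually.of_forall fun x => by positivity)]
  exact ENNReal.ofReal_lt_top

theorem transfer_of_asymmetry (N : ℕ) (E F : Set (EuclideanSpace ℝ (Fin N)))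
    (hE : MeasurableSet E) (hF : MeasurableSet F)
    (heq : gaussMeasure N E = gaussMeasure N F) (hpos : 0 < gaussMeasure N F)
    (κ : ℝ) (hκ0 : 0 < κ) (hκ : κ < 1/2)
    (hclose : (gaussMeasure N (symmDiff F E)).toReal / (gaussMeasure N F).toReal ≤
      κ * gaussAsym N F) :
    gaussAsym N E ≥ ((1 - 2 * κ) / (1 + 2 * κ)) * gaussAsym N F := by
  set μ := gaussMeasure N with hμ
  set m : ℝ := (μ F).toReal with hm
  have hm0 : 0 < m := ENNReal.toReal_pos hpos.ne' (measure_ne_top _ _)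
  set SF := {a : ℝ | ∃ ω : EuclideanSpace ℝ (Fin N), ∃ r : ℝ, ‖ω‖ = 1 ∧
    Phi r = (μ F).toReal ∧
    a = (μ (symmDiff F (halfspace N ω r))).toReal / (μ F).toReal} with hSF
  set SE := {a : ℝ | ∃ ω : EuclideanSpace ℝ (Fin N), ∃ r : ℝ, ‖ω‖ = 1 ∧
    Phi r = (μ E).toReal ∧
    a = (μ (symmDiff E (halfspace N ω r))).toReal / (μ E).toReal} with hSE
  have hAE : gaussAsym N E = sInf SE := rfl
  have hAF : gaussAsym N F = sInf SF := rfl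
  by_cases hP : ∃ ω : EuclideanSpace ℝ (Fin N), ∃ r : ℝ, ‖ω‖ = 1 ∧ Phi r = m
  · -- nonempty case
    obtain ⟨ω₀, r₀, hω₀, hr₀⟩ := hP
    have hneF : SF.Nonempty := ⟨_, ω₀, r₀, hω₀, hr₀, rfl⟩
    have hneE : SE.Nonempty := ⟨_, ω₀, r₀, hω₀, by rw [heq]; exact hr₀, rfl⟩
    have hbdF : BddBelow SF := by
      refine ⟨0, fun a ha => ?_⟩
      obtain ⟨ω, r, _, _, rfl⟩ := ha
      positivity
    have hAF0 : 0 ≤ gaussAsym N F := by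
      rw [hAF]
      exact le_csInf hneF fun a ha => by obtain ⟨ω, r, _, _, rfl⟩ := ha; positivity
    set A := gaussAsym N F with hA
    set c := (1 - 2 * κ) / (1 + 2 * κ) with hc
    have hcle : c ≤ 1 - κ := by
      rw [hc, div_le_iff₀ (by linarith)]
      nlinarith
    rw [hAE, ge_iff_le]
    refine le_csInf hneE fun a ha => ?_
    obtain ⟨ω, r, hω, hr, rfl⟩ := ha
    set H := halfspace N ω r with hH
    have htri : (μ (symmDiff F H)) ≤ μ (symmDiff F E) + μ (symmDiff E H) :=
      le_trans (measure_mono (symmDiff_triangle F E H)) (measure_union_le _ _)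
    have htriR : (μ (symmDiff F H)).toReal ≤
        (μ (symmDiff F E)).toReal + (μ (symmDiff E H)).toReal := by
      rw [← ENNReal.toReal_add (measure_ne_top _ _) (measure_ne_top _ _)]
      exact ENNReal.toReal_mono (by finiteness) htri
    have hmemF : (μ (symmDiff F H)).toReal / m ∈ SF :=
      ⟨ω, r, hω, by rw [← heq]; exact hr, rfl⟩
    have hFlb : A ≤ (μ (symmDiff F H)).toReal / m := csInf_le hbdF hmemF
    have hFlb' : A * m ≤ (μ (symmDiff F H)).toReal := by
      rw [← le_div_iff₀ hm0]; exact hFlb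
    have hclose' : (μ (symmDiff F E)).toReal ≤ κ * A * m := by
      have := hclose
      rw [div_le_iff₀ hm0] at this
      linarith [this]
    have hx0 : (0:ℝ) ≤ (μ (symmDiff E H)).toReal := ENNReal.toReal_nonneg
    have key : (1 - κ) * A * m ≤ (μ (symmDiff E H)).toReal := by nlinarith
    have : (1 - κ) * A ≤ (μ (symmDiff E H)).toReal / m := by
      rw [le_div_iff₀ hm0]; linarith
    have hmE : (μ E).toReal = m := by rw [heq]
    rw [hmE]
    nlinarith [mul_le_mul_of_nonneg_right hcle hAF0]
  · -- empty case : both candidate sets are empty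
    have hFe : SF = ∅ := by
      ext a; simp only [Set.mem_setOf_eq, Set.mem_empty_iff_false, iff_false]
      rintro ⟨ω, r, hω, hr, -⟩
      exact hP ⟨ω, r, hω, hr⟩
    have hEe : SE = ∅ := by
      ext a; simp only [Set.mem_setOf_eq, Set.mem_empty_iff_false, iff_false]
      rintro ⟨ω, r, hω, hr, -⟩
      exact hP ⟨ω, r, hω, by rw [hm, ← heq]; exact hr⟩
    rw [hAE, hAF, hFe, hEe, Real.sInf_empty]
    simp
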